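/- arXiv:2108.09871 — 5 statements merged into one kernel-verified Lean document; each statement's English description precedes it below -/
import Mathlib

section
/- The pair (ℚ₊^× ⋉ ℚ, ℕ^× ⋉ ℕ) is lattice ordered: every element of ℚ₊^× ⋉ ℚ has a least upper bound in ℕ^× ⋉ ℕ with respect to the left-invariant order g ≤ h ⟺ g^{-1}h ∈ ℕ^× ⋉ ℕ. Explicitly, if (a,r) ∈ ℚ₊^× ⋉ ℚ is written as a = d/c and r = k/c with c,d ∈ ℕ^×, k ∈ ℤ, and c minimal, then the least upper bound of (a,r) in ℕ^× ⋉ ℕ is (d, max(0,k)). -/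
/-- Multiplication on `G = ℚ₊^× ⋉ ℚ`: `(a,r)(b,s) = (ab, br+s)`. -/
def QposxQ.mul (x y : {a : ℚ // 0 < a} × ℚ) : {a : ℚ // 0 < a} × ℚ :=
  (⟨x.1.1 * y.1.1, mul_pos x.1.2 y.1.2⟩, y.1.1 * x.2 + y.2)

/-- Inversion on `G`: `(a,r)⁻¹ = (a⁻¹, -a⁻¹ r)`. -/
def QposxQ.inv (x : {a : ℚ // 0 < a} × ℚ) : {a : ℚ // 0 < a} × ℚ :=
  (⟨x.1.1⁻¹, inv_pos.mpr x.1.2⟩, -(x.1.1⁻¹ * x.2))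

/-- Membership in the positive cone `P = ℕ^× ⋉ ℕ`. -/
def QposxQ.memP (x : {a : ℚ // 0 < a} × ℚ) : Prop :=
  (∃ n : ℕ+, ((n : ℕ) : ℚ) = x.1.1) ∧ ∃ m : ℕ, (m : ℚ) = x.2

/-- The left-invariant order: `g ≤ h` iff `g⁻¹ h ∈ P`. -/
def QposxQ.le (x y : {a : ℚ // 0 < a} × ℚ) : Prop :=
  QposxQ.memP (QposxQ.mul (QposxQ.inv x) y)

/-- `(ℚ₊^× ⋉ ℚ, ℕ^× ⋉ ℕ)` is lattice ordered: every element of `G` has a least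
upper bound in `P`, and explicitly, if `(a,r) = (d/c, k/c)` with `c` minimal, then
the least upper bound is `(d, max 0 k)`. -/
lemma key (a : ℚ) (ha : 0 < a) (r : ℚ) (c d : ℕ+) (k : ℤ)
    (hac : a = (d : ℚ) / (c : ℚ)) (hrc : r = (k : ℚ) / (c : ℚ))
    (hmin : ∀ c' : ℕ+, ((∃ d' : ℕ+, ((d' : ℕ) : ℚ) = (c' : ℚ) * a) ∧
        ∃ k' : ℤ, (k' : ℚ) = (c' : ℚ) * r) → c ≤ c') :
    QposxQ.le (⟨a, ha⟩, r) (⟨(d : ℚ), by positivity⟩, ((max 0 k : ℤ) : ℚ)) ∧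
    ∀ z, QposxQ.memP z → QposxQ.le (⟨a, ha⟩, r) z →
      QposxQ.le (⟨(d : ℚ), by positivity⟩, ((max 0 k : ℤ) : ℚ)) z := by
  have hc0 : ((c : ℕ) : ℚ) ≠ 0 := by positivity
  have hd0 : ((d : ℕ) : ℚ) ≠ 0 := by positivity
  have ha0 : a ≠ 0 := ne_of_gt ha
  constructor
  · constructor
    · exact ⟨c, by simp [QposxQ.mul, QposxQ.inv, hac]⟩
    · refine ⟨(max 0 k - k).toNat, ?_⟩
      simp only [QposxQ.mul, QposxQ.inv]
      have h1 : ((d:ℕ):ℚ) * -(a⁻¹ * r) = -(k:ℚ) := by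
        rw [hac, hrc]; field_simp
      rw [h1]
      have h2 : (((max 0 k - k).toNat : ℤ)) = -k + max 0 k := by omega
      exact_mod_cast congrArg (fun z : ℤ => (z : ℚ)) h2
  · rintro ⟨⟨bq, hbq⟩, s⟩ ⟨⟨n, hn⟩, ⟨m, hm⟩⟩ ⟨⟨n₁, hn₁⟩, ⟨m₁, hm₁⟩⟩
    simp only [QposxQ.le, QposxQ.memP, QposxQ.mul, QposxQ.inv] at hn hm hn₁ hm₁ ⊢
    -- hn : n = bq, hm : m = s, hn₁ : n₁ = a⁻¹ * bq, hm₁ : m₁ = bq * (-(a⁻¹ * r)) + s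
    -- E1 : n₁ * d = c * n
    have E1 : (n₁ : ℕ) * (d : ℕ) = (c : ℕ) * (n : ℕ) := by
      have : ((n₁:ℕ):ℚ) * ((d:ℕ):ℚ) = ((c:ℕ):ℚ) * ((n:ℕ):ℚ) := by
        rw [hn₁, hn, hac]; field_simp
      exact_mod_cast this
    -- E2 : (n:ℤ) * k = ((m:ℤ) - m₁) * d
    have E2 : ((n : ℕ) : ℤ) * k = (((m : ℕ) : ℤ) - ((m₁ : ℕ) : ℤ)) * ((d : ℕ) : ℤ) := by
      have harr : a⁻¹ * r = (k:ℚ) / ((d:ℕ):ℚ) := by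
        rw [hac, hrc]; field_simp
      rw [← hn, ← hm, harr] at hm₁
      field_simp at hm₁
      have : (((n:ℕ):ℚ)) * ((k:ℤ):ℚ) = (((m:ℕ):ℚ) - ((m₁:ℕ):ℚ)) * (((d:ℕ)):ℚ) := by
        ring_nf at hm₁ ⊢; linarith
      exact_mod_cast this
    set j : ℤ := ((m : ℕ) : ℤ) - ((m₁ : ℕ) : ℤ) with hj
    -- n₁ * k = c * j
    have E3 : ((n₁ : ℕ) : ℤ) * k = ((c : ℕ) : ℤ) * j := by
      have hdz : ((d:ℕ):ℤ) ≠ 0 := by exact_mod_cast hd0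
      have : (((n₁:ℕ):ℤ) * k) * ((d:ℕ):ℤ) = (((c:ℕ):ℤ) * j) * ((d:ℕ):ℤ) := by
        have E1' : ((n₁:ℕ):ℤ) * ((d:ℕ):ℤ) = ((c:ℕ):ℤ) * ((n:ℕ):ℤ) := by exact_mod_cast E1
        calc (((n₁:ℕ):ℤ) * k) * ((d:ℕ):ℤ) = (((n₁:ℕ):ℤ) * ((d:ℕ):ℤ)) * k := by ring
          _ = ((c:ℕ):ℤ) * (((n:ℕ):ℤ) * k) := by rw [E1']; ring
          _ = ((c:ℕ):ℤ) * (j * ((d:ℕ):ℤ)) := by rw [E2]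
          _ = (((c:ℕ):ℤ) * j) * ((d:ℕ):ℤ) := by ring
      exact mul_right_cancel₀ hdz this
    -- gcd argument : c ∣ n₁
    have hcdvd : (c : ℕ) ∣ (n₁ : ℕ) := by
      set g : ℕ := Nat.gcd (c : ℕ) (n₁ : ℕ) with hg
      have hgpos : 0 < g := Nat.gcd_pos_of_pos_left _ c.2
      set u : ℤ := Nat.gcdA (c : ℕ) (n₁ : ℕ)
      set v : ℤ := Nat.gcdB (c : ℕ) (n₁ : ℕ)
      have hbez : (g : ℤ) = ((c:ℕ):ℤ) * u + ((n₁:ℕ):ℤ) * v := Nat.gcd_eq_gcd_ab _ _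
      -- g * a = u*d + v*n
      have hga : ((g : ℕ) : ℚ) * a = ((u * ((d:ℕ):ℤ) + v * ((n:ℕ):ℤ) : ℤ) : ℚ) := by
        have h1 : ((c:ℕ):ℚ) * a = ((d:ℕ):ℚ) := by rw [hac]; field_simp
        have h2 : ((n₁:ℕ):ℚ) * a = ((n:ℕ):ℚ) := by
          have hn₁' : ((n₁:ℕ):ℚ) = a⁻¹ * ((n:ℕ):ℚ) := by rw [hn₁, hn]
          rw [hn₁']; field_simp
        have : ((g:ℕ):ℚ) = ((c:ℕ):ℚ) * ((u:ℚ)) + ((n₁:ℕ):ℚ) * ((v:ℚ)) := by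
          exact_mod_cast congrArg (fun z : ℤ => (z : ℚ)) hbez
        rw [this]; push_cast
        linear_combination (u:ℚ) * h1 + (v:ℚ) * h2
      have hgr : ((g : ℕ) : ℚ) * r = ((u * k + v * j : ℤ) : ℚ) := by
        have h1 : ((c:ℕ):ℚ) * r = ((k:ℤ):ℚ) := by rw [hrc]; field_simp
        have h2 : ((n₁:ℕ):ℚ) * r = ((j:ℤ):ℚ) := by
          have hcz : ((c:ℕ):ℚ) ≠ 0 := hc0
          have E3' : ((n₁:ℕ):ℚ) * ((k:ℤ):ℚ) = ((c:ℕ):ℚ) * ((j:ℤ):ℚ) := by exact_mod_cast E3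
          have : ((n₁:ℕ):ℚ) * r * ((c:ℕ):ℚ) = ((j:ℤ):ℚ) * ((c:ℕ):ℚ) := by
            rw [hrc]; field_simp; linear_combination E3'
          exact mul_right_cancel₀ hc0 this
        have : ((g:ℕ):ℚ) = ((c:ℕ):ℚ) * ((u:ℚ)) + ((n₁:ℕ):ℚ) * ((v:ℚ)) := by
          exact_mod_cast congrArg (fun z : ℤ => (z : ℚ)) hbez
        rw [this]; push_cast
        linear_combination (u:ℚ) * h1 + (v:ℚ) * h2
      -- minimality gives c ≤ g
      have hD : (0:ℚ) < ((u * ((d:ℕ):ℤ) + v * ((n:ℕ):ℤ) : ℤ) : ℚ) := by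
        rw [← hga]; positivity
      have hDpos : 0 < u * ((d:ℕ):ℤ) + v * ((n:ℕ):ℤ) := by exact_mod_cast hD
      have hprop : (∃ d' : ℕ+, ((d' : ℕ) : ℚ) = ((g : ℕ) : ℚ) * a) ∧
          ∃ k' : ℤ, ((k' : ℤ) : ℚ) = ((g : ℕ) : ℚ) * r := by
        constructor
        · refine ⟨⟨(u * ((d:ℕ):ℤ) + v * ((n:ℕ):ℤ)).toNat, by omega⟩, ?_⟩
          show (((u * ((d:ℕ):ℤ) + v * ((n:ℕ):ℤ)).toNat : ℕ) : ℚ) = _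
          rw [hga]
          exact_mod_cast congrArg (fun z : ℤ => (z : ℚ))
            (Int.toNat_of_nonneg (le_of_lt hDpos))
        · exact ⟨u * k + v * j, by rw [hgr]⟩
      have hle : c ≤ (⟨g, hgpos⟩ : ℕ+) := hmin ⟨g, hgpos⟩ hprop
      have hle' : (c : ℕ) ≤ g := hle
      have hgle : g ≤ (c : ℕ) := Nat.le_of_dvd c.2 (Nat.gcd_dvd_left _ _)
      have : (c : ℕ) = g := le_antisymm hle' hgle
      rw [this]; exact Nat.gcd_dvd_right _ _
    obtain ⟨m₂, hm₂⟩ := hcdvd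
    have hm₂pos : 0 < m₂ := by
      have h1 : 0 < (n₁ : ℕ) := n₁.2
      by_contra h
      push_neg at h
      have h0 : m₂ = 0 := Nat.le_zero.mp h
      rw [h0, Nat.mul_zero] at hm₂
      omega
    -- n = m₂ * d
    have hnm : (n : ℕ) = m₂ * (d : ℕ) := by
      have : (c:ℕ) * ((n:ℕ)) = (c:ℕ) * (m₂ * (d:ℕ)) := by
        rw [← E1, hm₂]; ring
      exact Nat.eq_of_mul_eq_mul_left c.2 this
    constructor
    · refine ⟨⟨m₂, hm₂pos⟩, ?_⟩
      show ((m₂ : ℕ) : ℚ) = (((d:ℕ):ℚ))⁻¹ * bq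
      have hb : bq = ((m₂ : ℕ) : ℚ) * ((d:ℕ):ℚ) := by
        rw [← hn]; exact_mod_cast congrArg (fun t : ℕ => (t : ℚ)) hnm
      rw [hb]; field_simp
    · refine ⟨(((m:ℕ):ℤ) - (m₂:ℤ) * max 0 k).toNat, ?_⟩
      have hnonneg : (0:ℤ) ≤ ((m:ℕ):ℤ) - (m₂:ℤ) * max 0 k := by
        rcases le_or_gt k 0 with hk | hk
        · rw [max_eq_left hk]; omega
        · rw [max_eq_right (le_of_lt hk)]
          -- m - m₂ * k = m₁
          have : (m₂:ℤ) * k = ((m:ℕ):ℤ) - ((m₁:ℕ):ℤ) := by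
            have hdz : ((d:ℕ):ℤ) ≠ 0 := by exact_mod_cast hd0
            have : ((m₂:ℤ) * k) * ((d:ℕ):ℤ) = (((m:ℕ):ℤ) - ((m₁:ℕ):ℤ)) * ((d:ℕ):ℤ) := by
              have hnm' : ((n:ℕ):ℤ) = (m₂:ℤ) * ((d:ℕ):ℤ) := by exact_mod_cast hnm
              calc ((m₂:ℤ) * k) * ((d:ℕ):ℤ) = ((m₂:ℤ) * ((d:ℕ):ℤ)) * k := by ring
                _ = ((n:ℕ):ℤ) * k := by rw [hnm']
                _ = (((m:ℕ):ℤ) - ((m₁:ℕ):ℤ)) * ((d:ℕ):ℤ) := E2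
            exact mul_right_cancel₀ hdz this
          omega
      have hbqd : bq * -(((d:ℕ):ℚ)⁻¹ * ((max 0 k : ℤ):ℚ)) + s
          = ((((m:ℕ):ℤ) - (m₂:ℤ) * max 0 k : ℤ) : ℚ) := by
        rw [← hn, ← hm, hnm]
        push_cast
        field_simp
        ring
      rw [hbqd]
      exact_mod_cast congrArg (fun z : ℤ => (z : ℚ)) (Int.toNat_of_nonneg hnonneg)


/-- lub theorem -/
theorem stmt3 :
    (∀ x : {a : ℚ // 0 < a} × ℚ, ∃ y : {a : ℚ // 0 < a} × ℚ,
      QposxQ.memP y ∧ QposxQ.le x y ∧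
      ∀ z, QposxQ.memP z → QposxQ.le x z → QposxQ.le y z) ∧
    (∀ (x : {a : ℚ // 0 < a} × ℚ) (c d : ℕ+) (k : ℤ),
      x.1.1 = (d : ℚ) / (c : ℚ) → x.2 = (k : ℚ) / (c : ℚ) →
      (∀ c' : ℕ+, ((∃ d' : ℕ+, ((d' : ℕ) : ℚ) = (c' : ℚ) * x.1.1) ∧
          ∃ k' : ℤ, (k' : ℚ) = (c' : ℚ) * x.2) → c ≤ c') →
      QposxQ.le x (⟨(d : ℚ), by positivity⟩, ((max 0 k : ℤ) : ℚ)) ∧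
      ∀ z, QposxQ.memP z → QposxQ.le x z →
        QposxQ.le (⟨(d : ℚ), by positivity⟩, ((max 0 k : ℤ) : ℚ)) z) := by
  constructor
  · rintro ⟨⟨a, ha⟩, r⟩
    classical
    -- find minimal c
    set P : ℕ → Prop := fun t => 0 < t ∧ (∃ D : ℤ, (D : ℚ) = (t : ℚ) * a) ∧
      ∃ K : ℤ, (K : ℚ) = (t : ℚ) * r with hP
    have hex : ∃ t, P t := by
      have hda : ((a.den : ℕ) : ℚ) * a = (a.num : ℚ) := by
        rw [mul_comm, Rat.mul_den_eq_num]
      have hdr : ((r.den : ℕ) : ℚ) * r = (r.num : ℚ) := by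
        rw [mul_comm, Rat.mul_den_eq_num]
      refine ⟨a.den * r.den, Nat.mul_pos a.pos r.pos, ⟨a.num * r.den, ?_⟩,
        ⟨r.num * a.den, ?_⟩⟩
      · push_cast
        nlinarith [hda]
      · push_cast
        nlinarith [hdr]
    set c₀ : ℕ := Nat.find hex with hc₀
    obtain ⟨hc₀pos, ⟨D, hD⟩, ⟨K, hK⟩⟩ := Nat.find_spec hex
    rw [← hc₀] at hD hK hc₀pos
    have hDpos : 0 < D := by
      have : (0:ℚ) < (D:ℚ) := by rw [hD]; positivity
      exact_mod_cast this
    set c : ℕ+ := ⟨c₀, hc₀pos⟩ with hc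
    set d : ℕ+ := ⟨D.toNat, by omega⟩ with hd
    have hdq : ((d : ℕ) : ℚ) = (D : ℚ) := by
      show ((D.toNat : ℕ) : ℚ) = _
      exact_mod_cast congrArg (fun z : ℤ => (z : ℚ)) (Int.toNat_of_nonneg (le_of_lt hDpos))
    have hcq : ((c : ℕ) : ℚ) = (c₀ : ℚ) := rfl
    have hc0 : ((c₀ : ℕ) : ℚ) ≠ 0 := by exact_mod_cast hc₀pos.ne'
    have hac : a = ((d : ℕ) : ℚ) / ((c : ℕ) : ℚ) := by
      rw [hdq, hcq]
      field_simp
      linarith [hD]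
    have hrc : r = ((K : ℤ) : ℚ) / ((c : ℕ) : ℚ) := by
      rw [hcq]
      field_simp
      linarith [hK]
    have hmin : ∀ c' : ℕ+, ((∃ d' : ℕ+, ((d' : ℕ) : ℚ) = ((c' : ℕ) : ℚ) * a) ∧
        ∃ k' : ℤ, ((k' : ℤ) : ℚ) = ((c' : ℕ) : ℚ) * r) → c ≤ c' := by
      rintro c' ⟨⟨d', hd'⟩, ⟨k', hk'⟩⟩
      have hP' : P (c' : ℕ) := ⟨c'.2, ⟨((d' : ℕ) : ℤ), by push_cast; exact_mod_cast hd'⟩,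
        ⟨k', hk'⟩⟩
      exact Nat.find_min' hex hP'
    obtain ⟨h1, h2⟩ := key a ha r c d K hac hrc hmin
    refine ⟨(⟨((d : ℕ) : ℚ), by positivity⟩, ((max 0 K : ℤ) : ℚ)), ?_, h1, h2⟩
    refine ⟨⟨d, rfl⟩, ⟨(max 0 K).toNat, ?_⟩⟩
    show (((max 0 K).toNat : ℕ) : ℚ) = ((max 0 K : ℤ) : ℚ)
    have : (0:ℤ) ≤ max 0 K := le_max_left _ _
    exact_mod_cast congrArg (fun z : ℤ => (z : ℚ)) (Int.toNat_of_nonneg this)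
  · rintro ⟨⟨a, ha⟩, r⟩ c d k hac hrc hmin
    exact key a ha r c d k hac hrc hmin
end

section
/- Let S and {V_a : a ∈ ℕ^×} be isometries on a Hilbert space satisfying S V_a = V_a S^a, V_a V_b = V_{ab}, V_a* V_b = V_b V_a* when gcd(a,b)=1, and S* V_a = V_a (S*)^a. Suppose moreover V_a V_a* = 1 for all a. Then for each positive rational r = b/a (a,b ∈ ℕ^×), the element W_r := V_a S^b V_a* is a well-defined isometry: if b/a = d/c then V_a S^b V_a* = V_c S^d V_c*. -/
/-- Under (T1)–(T4) and `V_a V_a* = 1`, the element `W_{b/a} := V_a S^b V_a*`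
is a well-defined isometry. -/
theorem stmt8 {H : Type*} [NormedAddCommGroup H] [InnerProductSpace ℂ H]
    [CompleteSpace H] (S : H →L[ℂ] H) (V : ℕ+ → H →L[ℂ] H)
    (hS : star S * S = 1) (hV : ∀ a, star (V a) * V a = 1)
    (hT1 : ∀ a : ℕ+, S * V a = V a * S ^ (a : ℕ))
    (hT2 : ∀ a b : ℕ+, V a * V b = V (a * b))
    (hT3 : ∀ a b : ℕ+, Nat.Coprime (a : ℕ) (b : ℕ) →
      star (V a) * V b = V b * star (V a))
    (hT4 : ∀ a : ℕ+, star S * V a = V a * (star S) ^ (a : ℕ))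
    (hT5 : ∀ a : ℕ+, V a * star (V a) = 1) :
    ∀ a b c d : ℕ+,
      star (V a * S ^ (b : ℕ) * star (V a)) * (V a * S ^ (b : ℕ) * star (V a)) = 1 ∧
      ((b : ℕ) * (c : ℕ) = (a : ℕ) * (d : ℕ) →
        V a * S ^ (b : ℕ) * star (V a) = V c * S ^ (d : ℕ) * star (V c)) := by
  -- powers of S are isometries
  have hSpow : ∀ n : ℕ, star (S ^ n) * S ^ n = 1 := by
    intro n
    induction n with
    | zero => simp
    | succ n ih =>
      rw [pow_succ, star_mul, mul_assoc, ← mul_assoc (star (S ^ n)), ih, one_mul, hS]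
  -- commutation: S^b V_k = V_k S^{k b}
  have hcomm : ∀ (b : ℕ) (k : ℕ+), S ^ b * V k = V k * S ^ ((k : ℕ) * b) := by
    intro b k
    induction b with
    | zero => simp
    | succ b ih =>
      rw [pow_succ, mul_assoc, hT1, ← mul_assoc, ih, mul_assoc, ← pow_add,
        Nat.mul_succ]
  -- collapsing: V_k S^{k b} V_k* = S^b
  have hcollapse : ∀ (b : ℕ) (k : ℕ+), V k * S ^ ((k : ℕ) * b) * star (V k) = S ^ b := by
    intro b k
    rw [← hcomm, mul_assoc, hT5, mul_one]
  -- scaling: V_{a k} S^{b k} V_{a k}* = V_a S^b V_a*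
  have hscale : ∀ (a k : ℕ+) (b : ℕ),
      V (a * k) * S ^ (b * (k : ℕ)) * star (V (a * k)) = V a * S ^ b * star (V a) := by
    intro a k b
    rw [← hT2, star_mul, Nat.mul_comm b (k : ℕ),
      show V a * V k * S ^ ((k : ℕ) * b) * (star (V k) * star (V a))
        = V a * (V k * S ^ ((k : ℕ) * b) * star (V k)) * star (V a) by
          simp only [mul_assoc], hcollapse]
  intro a b c d
  constructor
  · rw [star_mul, star_mul, star_star,
      show V a * (star (S ^ (b : ℕ)) * star (V a)) * (V a * S ^ (b : ℕ) * star (V a))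
        = V a * star (S ^ (b : ℕ)) * (star (V a) * V a) * (S ^ (b : ℕ) * star (V a)) by
          simp only [mul_assoc],
      hV, mul_one, ← mul_assoc, mul_assoc (V a), hSpow, mul_one, hT5]
  · intro h
    have h1 := hscale a c (b : ℕ)
    have h2 := hscale c a (d : ℕ)
    rw [mul_comm c a] at h2
    rw [← h1, ← h2, h, Nat.mul_comm]
end

section
/- Under the hypotheses of the previous statement (isometries S, V_a satisfying (T1)–(T4) and V_a V_a* = 1), the map W : ℚ₊ → B(H) defined by W_{b/a} = V_a S^b V_a* is a semigroup homomorphism: W_r W_s = W_{r+s} for all r, s ∈ ℚ₊. In particular, for r = b/a and s = d/c with a = a'g, c = c'g, g = gcd(a,c), one has (V_a S^b V_a*)(V_c S^d V_c*) = V_{ac'} S^{bc'+a'd} V_{ac'}*. -/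
/-- Under (T1)–(T5), `W_{b/a} := V_a S^b V_a*` is additive: `W_r W_s = W_{r+s}`.
In particular, with `g = gcd(a,c)`, `a = a' g`, `c = c' g`, one has
`(V_a S^b V_a*)(V_c S^d V_c*) = V_{ac'} S^{bc'+a'd} V_{ac'}*`. -/
theorem stmt9 {H : Type*} [NormedAddCommGroup H] [InnerProductSpace ℂ H]
    [CompleteSpace H] (S : H →L[ℂ] H) (V : ℕ+ → H →L[ℂ] H)
    (hS : star S * S = 1) (hV : ∀ a, star (V a) * V a = 1)
    (hT1 : ∀ a : ℕ+, S * V a = V a * S ^ (a : ℕ))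
    (hT2 : ∀ a b : ℕ+, V a * V b = V (a * b))
    (hT3 : ∀ a b : ℕ+, Nat.Coprime (a : ℕ) (b : ℕ) →
      star (V a) * V b = V b * star (V a))
    (hT4 : ∀ a : ℕ+, star S * V a = V a * (star S) ^ (a : ℕ))
    (hT5 : ∀ a : ℕ+, V a * star (V a) = 1) :
    (∀ a b c d : ℕ+,
      (V a * S ^ (b : ℕ) * star (V a)) * (V c * S ^ (d : ℕ) * star (V c)) =
        V (a * c) * S ^ ((b : ℕ) * (c : ℕ) + (a : ℕ) * (d : ℕ)) * star (V (a * c))) ∧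
    (∀ a b c d a' c' g : ℕ+, (g : ℕ) = Nat.gcd (a : ℕ) (c : ℕ) →
      a = a' * g → c = c' * g →
      (V a * S ^ (b : ℕ) * star (V a)) * (V c * S ^ (d : ℕ) * star (V c)) =
        V (a * c') * S ^ ((b : ℕ) * (c' : ℕ) + (a' : ℕ) * (d : ℕ)) *
          star (V (a * c'))) := by
  -- (L1) `S^b V_a = V_a S^{b a}`
  have L1 : ∀ (a : ℕ+) (b : ℕ), S ^ b * V a = V a * S ^ (b * (a : ℕ)) := by
    intro a b
    induction b with
    | zero => simp
    | succ n ih =>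
      rw [pow_succ', mul_assoc, ih, ← mul_assoc, hT1, mul_assoc, ← pow_add,
        Nat.succ_mul, Nat.add_comm]
  -- adjoint of (T4): `V_a* S = S^a V_a*`
  have hadj : ∀ a : ℕ+, star (V a) * S = S ^ (a : ℕ) * star (V a) := by
    intro a
    have := congrArg star (hT4 a)
    simpa [star_mul, star_pow, star_star] using this
  -- (L2) `V_a* S^d = S^{d a} V_a*`
  have L2 : ∀ (a : ℕ+) (d : ℕ), star (V a) * S ^ d = S ^ (d * (a : ℕ)) * star (V a) := by
    intro a d
    induction d with
    | zero => simp
    | succ n ih =>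
      rw [pow_succ, ← mul_assoc, ih, mul_assoc, hadj, ← mul_assoc, ← pow_add,
        Nat.succ_mul]
  -- (L3) `V_a* V_c = V_c V_a*` (no coprimality needed, using (T5))
  have L3 : ∀ a c : ℕ+, star (V a) * V c = V c * star (V a) := by
    intro a c
    have h : V a * V c = V c * V a := by rw [hT2, hT2, mul_comm]
    calc star (V a) * V c
        = star (V a) * V c * 1 := (mul_one _).symm
      _ = star (V a) * V c * (V a * star (V a)) := by rw [hT5]
      _ = star (V a) * (V c * V a) * star (V a) := by simp only [mul_assoc]
      _ = star (V a) * (V a * V c) * star (V a) := by rw [h]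
      _ = (star (V a) * V a) * (V c * star (V a)) := by simp only [mul_assoc]
      _ = V c * star (V a) := by rw [hV, one_mul]
  -- main multiplication formula, natural exponents
  have main : ∀ (a c : ℕ+) (b d : ℕ),
      (V a * S ^ b * star (V a)) * (V c * S ^ d * star (V c)) =
        V (a * c) * S ^ (b * (c : ℕ) + (a : ℕ) * d) * star (V (a * c)) := by
    intro a c b d
    calc (V a * S ^ b * star (V a)) * (V c * S ^ d * star (V c))
        = V a * S ^ b * ((star (V a) * V c) * (S ^ d * star (V c))) := by
          simp only [mul_assoc]
      _ = V a * S ^ b * ((V c * star (V a)) * (S ^ d * star (V c))) := by rw [L3]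
      _ = V a * ((S ^ b * V c) * ((star (V a) * S ^ d) * star (V c))) := by
          simp only [mul_assoc]
      _ = V a * ((V c * S ^ (b * (c : ℕ))) * ((S ^ (d * (a : ℕ)) * star (V a)) * star (V c))) := by
          rw [L1, L2]
      _ = (V a * V c) * (S ^ (b * (c : ℕ)) * S ^ (d * (a : ℕ))) * (star (V a) * star (V c)) := by
          simp only [mul_assoc]
      _ = V (a * c) * S ^ (b * (c : ℕ) + d * (a : ℕ)) * star (V c * V a) := by
          rw [hT2, ← pow_add, ← star_mul]
      _ = V (a * c) * S ^ (b * (c : ℕ) + (a : ℕ) * d) * star (V (a * c)) := by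
          rw [hT2, mul_comm c a, Nat.mul_comm d (a : ℕ)]
  -- shrinking: `V_g S^{k g} V_g* = S^k`
  have shrink : ∀ (g : ℕ+) (k : ℕ), V g * S ^ (k * (g : ℕ)) * star (V g) = S ^ k := by
    intro g k
    rw [← L1, mul_assoc, hT5, mul_one]
  refine ⟨fun a b c d => main a c b d, ?_⟩
  intro a b c d a' c' g hg ha hc
  subst ha; subst hc
  rw [main]
  have e1 : a' * g * (c' * g) = a' * g * c' * g := by
    rw [← PNat.coe_inj]; push_cast; ring
  have e2 : (b : ℕ) * ((c' * g : ℕ+) : ℕ) + ((a' * g : ℕ+) : ℕ) * (d : ℕ) =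
      ((b : ℕ) * (c' : ℕ) + (a' : ℕ) * (d : ℕ)) * (g : ℕ) := by
    push_cast; ring
  rw [e1, e2, ← hT2, star_mul]
  calc V (a' * g * c') * V g * S ^ (((b : ℕ) * (c' : ℕ) + (a' : ℕ) * (d : ℕ)) * (g : ℕ)) *
        (star (V g) * star (V (a' * g * c')))
      = V (a' * g * c') * (V g * S ^ (((b : ℕ) * (c' : ℕ) + (a' : ℕ) * (d : ℕ)) * (g : ℕ)) *
          star (V g)) * star (V (a' * g * c')) := by simp only [mul_assoc]
    _ = V (a' * g * c') * S ^ ((b : ℕ) * (c' : ℕ) + (a' : ℕ) * (d : ℕ)) *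
          star (V (a' * g * c')) := by rw [shrink]
end

section
/- Let S = lim← ℤ/nℤ-indexed solenoid, realized as S = {(z_n)_{n∈ℕ^×} : z_n ∈ 𝕋 and n = mc ⟹ z_m = z_n^c}, with ℚ₊^× acting by ((a/b)·z)_n = z_{nb}^a for a,b ∈ ℕ^×. Then the action of ℚ₊^× on S \ {1} is free: if (a/b)·z = z and z ≠ 1 (the constant sequence 1), then a = b. -/
/-- Membership in the solenoid `S = lim← 𝕋`: a family `(z_n)_{n ∈ ℕ^×}` with
`z_m = z_{mc}^c`. -/
def inSolenoid (z : ℕ+ → Circle) : Prop := ∀ m c : ℕ+, z m = (z (m * c)) ^ (c : ℕ)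

/-- The action of `ℚ₊^×` on the solenoid minus the identity is free: if the
coordinatewise action of `a/b` fixes `z ≠ 1`, then `a = b`. -/
theorem stmt16 (z : ℕ+ → Circle) (hz : inSolenoid z)
    (hz1 : ∃ n : ℕ+, z n ≠ 1) (a b : ℕ+)
    (hfix : ∀ n : ℕ+, (z (n * b)) ^ (a : ℕ) = z n) :
    a = b := by
  by_contra hne
  obtain ⟨n, hn⟩ := hz1
  set e : ℕ := ((a : ℤ) - (b : ℤ)).natAbs with he
  have hepos : 0 < e := by
    rw [he, Int.natAbs_pos, sub_ne_zero]
    exact_mod_cast hne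
  have hkey : ∀ m : ℕ+, z (m * b) ^ e = 1 := by
    intro m
    have h1 : z (m * b) ^ (a : ℕ) = z (m * b) ^ (b : ℕ) := by
      rw [hfix m, ← hz m b]
    have h2 : z (m * b) ^ ((a : ℤ) - (b : ℤ)) = 1 := by
      rw [zpow_sub, zpow_natCast, zpow_natCast, h1]; exact mul_inv_cancel _
    have h3 : z (m * b) ^ (e : ℤ) = 1 := by
      rcases Int.natAbs_eq ((a : ℤ) - (b : ℤ)) with h | h
      · rw [← he] at h; rw [← h]; exact h2
      · rw [← he] at h
        have : ((e : ℤ)) = -((a : ℤ) - (b : ℤ)) := by omega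
      -- x^e = (x^(a-b))⁻¹ = 1
        rw [this, zpow_neg, h2, inv_one]
    rw [← zpow_natCast]
    exact h3
  let e' : ℕ+ := ⟨e, hepos⟩
  apply hn
  have h := hz n (b * e')
  rw [h]
  have h4 : n * (b * e') = (n * e') * b := by ring
  have h5 : ((b * e' : ℕ+) : ℕ) = e * b := by
    exact (PNat.mul_coe b e').trans (mul_comm _ _)
  rw [h4, h5, pow_mul, hkey (n * e'), one_pow]
end

section
/- Let S = {(z_n)_{n∈ℕ^×} : z_n ∈ 𝕋 and n = mc ⟹ z_m = z_n^c} be the solenoid (as a subspace of the product ∏_{n∈ℕ^×} 𝕋 with the product topology), with ℚ₊^× acting by ((a/b)·z)_n = z_{nb}^a. Then the orbit of every w ∈ S with w ≠ 1 is dense in S. -/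
open Real Filter Topology

namespace Stmt17Aux

lemma exp_npow (x : ℝ) (n : ℕ) : Circle.exp x ^ n = Circle.exp (n * x) := by
  apply Subtype.ext
  rw [Circle.coe_pow, Circle.coe_exp, Circle.coe_exp, ← Complex.exp_nat_mul]
  push_cast
  ring_nf

lemma dist_exp_exp (s t : ℝ) (h : |s - t| ≤ 1) :
    dist (Circle.exp s) (Circle.exp t) ≤ 2 * |s - t| := by
  have hdist : dist (Circle.exp s) (Circle.exp t)
      = ‖Complex.exp (↑s * Complex.I) - Complex.exp (↑t * Complex.I)‖ := by
    change dist ((Circle.exp s : ℂ)) ((Circle.exp t : ℂ)) = _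
    simp [Circle.coe_exp, Complex.dist_eq]
  have hfac : Complex.exp (↑s * Complex.I) - Complex.exp (↑t * Complex.I)
      = Complex.exp (↑t * Complex.I) * (Complex.exp ((↑(s - t)) * Complex.I) - 1) := by
    rw [mul_sub, ← Complex.exp_add, mul_one]
    push_cast
    ring_nf
  have habs : ‖(↑(s - t) : ℂ) * Complex.I‖ = |s - t| := by
    rw [norm_mul, Complex.norm_I, mul_one, Complex.norm_real, Real.norm_eq_abs]
  rw [hdist, hfac, norm_mul, Complex.norm_exp_ofReal_mul_I, one_mul]
  calc ‖Complex.exp ((↑(s - t)) * Complex.I) - 1‖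
      ≤ 2 * ‖(↑(s - t) : ℂ) * Complex.I‖ :=
        Complex.norm_exp_sub_one_le (by rw [habs]; exact h)
    _ = 2 * |s - t| := by rw [habs]

end Stmt17Aux

namespace Stmt17Aux

lemma dense_of_powers (A : Set Circle)
    (h : ∀ j : ℕ, ∃ ζ : Circle, (∀ a : ℕ, 1 ≤ a → a ≤ j → ζ ^ a ≠ 1) ∧
      ∀ n : ℕ, 0 < n → ζ ^ n ∈ A) : Dense A := by
  rw [← dense_closure, Metric.dense_iff]
  intro x r hr
  set j : ℕ := max 7 (⌈4 * π / r⌉₊ + 1) with hjdef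
  have hj0 : (0:ℝ) < j := by positivity
  have hjr : 4 * π / (j:ℝ) < r := by
    rw [div_lt_iff₀ hj0]
    have h1 : 4 * π / r < (j:ℝ) := by
      have : (⌈4 * π / r⌉₊ + 1 : ℕ) ≤ j := le_max_right _ _
      calc 4 * π / r ≤ (⌈4 * π / r⌉₊ : ℝ) := Nat.le_ceil _
        _ < ((⌈4 * π / r⌉₊ + 1 : ℕ) : ℝ) := by push_cast; linarith
        _ ≤ (j : ℝ) := by exact_mod_cast this
    calc 4 * π = (4 * π / r) * r := by field_simp
      _ < (j:ℝ) * r := by exact mul_lt_mul_of_pos_right h1 hr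
      _ = r * (j:ℝ) := mul_comm _ _
  obtain ⟨ζ, hζ1, hζA⟩ := h j
  -- 1 is in the closure of A
  have h1 : (1 : Circle) ∈ closure A := by
    rw [mem_closure_iff_clusterPt]
    refine (mapClusterPt_one_atTop_pow ζ).clusterPt.mono ?_
    rw [Filter.le_principal_iff, Filter.mem_map]
    exact Filter.mem_of_superset (Filter.mem_atTop 1) fun n hn => hζA n hn
  have hpow : ∀ n : ℕ, ζ ^ n ∈ closure A := by
    intro n
    cases n with
    | zero => simpa using h1
    | succ k => exact subset_closure (hζA _ (Nat.succ_pos k))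
  set C : Subgroup Circle := (Subgroup.zpowers ζ).topologicalClosure with hC
  have hCsub : (C : Set Circle) ⊆ closure A := by
    rw [hC, Subgroup.topologicalClosure_coe, Subgroup.coe_zpowers,
      closure_range_zpow_eq_pow]
    exact closure_minimal (Set.range_subset_iff.2 hpow) isClosed_closure
  set H : AddSubgroup ℝ := (Subgroup.toAddSubgroup C).comap Circle.expHom with hH
  have hmemH : ∀ t : ℝ, t ∈ H ↔ Circle.exp t ∈ C := fun t => Iff.rfl
  have h2pi : (2 * π) ∈ H := by
    rw [hmemH, Circle.exp_two_pi]; exact one_mem C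
  have hθ : Complex.arg (ζ:ℂ) ∈ H := by
    rw [hmemH, Circle.exp_arg]
    exact Subgroup.le_topologicalClosure _ (Subgroup.mem_zpowers ζ)
  rcases AddSubgroup.dense_or_cyclic H with hd | ⟨g, hg⟩
  · -- dense subgroup of ℝ: exp image is dense
    have hsurj : Function.Surjective (Circle.exp : ℝ → Circle) :=
      fun z => ⟨Complex.arg (z:ℂ), Circle.exp_arg z⟩
    have hdi : Dense (Circle.exp '' (H : Set ℝ)) :=
      hsurj.denseRange.dense_image Circle.exp.continuous hd
    have : Dense (closure A) := hdi.mono (by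
      rintro u ⟨t, ht, hut⟩
      exact hCsub (hut ▸ (hmemH t).1 ht))
    exact Metric.dense_iff.1 this x r hr
  · rw [← AddSubgroup.zmultiples_eq_closure] at hg
    have hgH : g ∈ H := hg ▸ AddSubgroup.mem_zmultiples g
    obtain ⟨q, hq⟩ : ∃ q : ℤ, q • g = 2 * π := by
      have := hg ▸ h2pi
      exact AddSubgroup.mem_zmultiples_iff.1 this
    obtain ⟨p, hp⟩ : ∃ p : ℤ, p • g = Complex.arg (ζ:ℂ) := by
      have := hg ▸ hθ
      exact AddSubgroup.mem_zmultiples_iff.1 this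
    have hπ : (0:ℝ) < π := Real.pi_pos
    have hqne : q ≠ 0 := by
      rintro rfl; simp at hq
    have hgne : g ≠ 0 := by
      rintro rfl; simp at hq
    have hpg : (p:ℝ) * g = Complex.arg (ζ:ℂ) := by rw [← hp, zsmul_eq_mul]
    have hqg : (q:ℝ) * g = 2 * π := by rw [← hq, zsmul_eq_mul]
    have hA : ((q.natAbs : ℕ) : ℝ) = |(q : ℝ)| := by
      simp [Nat.cast_natAbs]
    have hord : ζ ^ q.natAbs = 1 := by
      have hζeq : ζ = Circle.exp (Complex.arg (ζ:ℂ)) := (Circle.exp_arg ζ).symm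
      rw [hζeq, exp_npow]
      rcases abs_choice ((q:ℝ)) with hc | hc
      · have heq : (q.natAbs : ℝ) * Complex.arg (ζ:ℂ) = (p:ℝ) * (2 * π) := by
          rw [hA, hc, ← hpg]
          linear_combination (p:ℝ) * hqg
        rw [heq]
        exact Circle.exp_int_mul_two_pi p
      · have heq : (q.natAbs : ℝ) * Complex.arg (ζ:ℂ) = ((-p : ℤ):ℝ) * (2 * π) := by
          rw [hA, hc, ← hpg]
          push_cast
          linear_combination (-p:ℝ) * hqg
        rw [heq]
        exact Circle.exp_int_mul_two_pi (-p)
    have hqj : j < q.natAbs := by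
      by_contra hle
      push_neg at hle
      exact hζ1 q.natAbs (Int.natAbs_pos.2 hqne) hle hord
    have hgpos : 0 < |g| := abs_pos.2 hgne
    have hqabs : (q.natAbs : ℝ) * |g| = 2 * π := by
      have h1 : |(q:ℝ) * g| = 2 * π := by
        rw [hqg, abs_of_pos (by positivity)]
      rw [hA, ← abs_mul, h1]
    have hjq : (j:ℝ) < (q.natAbs:ℝ) := by exact_mod_cast hqj
    have hgabs : |g| < 2 * π / j := by
      rw [lt_div_iff₀ hj0]
      calc |g| * j < |g| * q.natAbs := mul_lt_mul_of_pos_left hjq hgpos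
        _ = 2 * π := by rw [mul_comm]; exact hqabs
    set t := Complex.arg (x:ℂ) with htdef
    set k : ℤ := round (t / g) with hk
    have hxexp : Circle.exp t = x := Circle.exp_arg x
    have hclose : |t - k * g| ≤ |g| / 2 := by
      have h1 : |t/g - k| ≤ 1/2 := abs_sub_round (t/g)
      have h2 : t - k*g = g * (t/g - k) := by field_simp
      rw [h2, abs_mul]
      calc |g| * |t/g - (k:ℝ)| ≤ |g| * (1/2) := mul_le_mul_of_nonneg_left h1 (abs_nonneg g)
        _ = |g|/2 := by ring
    have hg1 : |g| ≤ 1 := by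
      have h7 : (7:ℝ) ≤ j := by exact_mod_cast le_max_left 7 (⌈4 * π / r⌉₊ + 1)
      have hlt : 2 * π / (j:ℝ) ≤ 2 * π / 7 :=
        div_le_div_of_nonneg_left (by positivity) (by norm_num) h7
      nlinarith [Real.pi_lt_d2]
    have hy : Circle.exp (k*g) ∈ closure A := by
      apply hCsub
      have hmem : ((k:ℤ) • g : ℝ) ∈ H := AddSubgroup.zsmul_mem H hgH k
      rw [zsmul_eq_mul] at hmem
      exact (hmemH _).1 hmem
    refine ⟨Circle.exp (k*g), Metric.mem_ball.2 ?_, hy⟩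
    rw [← hxexp]
    have hd := dist_exp_exp ((k:ℝ)*g) t (by rw [abs_sub_comm]; linarith)
    rw [abs_sub_comm] at hd
    calc dist (Circle.exp ((k:ℝ)*g)) (Circle.exp t) ≤ 2 * |t - (k:ℝ)*g| := hd
      _ ≤ |g| := by linarith
      _ < 2 * π / j := hgabs
      _ < r := by
        have : 2 * π / (j:ℝ) < 4 * π / j := by
          apply div_lt_div_of_pos_right ?_ hj0
          linarith
        linarith

end Stmt17Aux

/-- For any `w ≠ 1` in the solenoid, the `ℚ₊^×`-orbit of `w` is dense in the
solenoid (with the topology inherited from the product topology). -/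
theorem stmt17 (w : ℕ+ → Circle) (hw : inSolenoid w) (hw1 : ∃ n : ℕ+, w n ≠ 1) :
    {z : ℕ+ → Circle | inSolenoid z} ⊆
      closure {z : ℕ+ → Circle |
        ∃ a b : ℕ+, z = fun n => (w (n * b)) ^ (a : ℕ)} := by
  classical
  obtain ⟨m, hm⟩ := hw1
  have key : ∀ N : ℕ+, Dense {u : Circle | ∃ a b : ℕ+, u = (w (N * b)) ^ ((a : ℕ+) : ℕ)} := by
    intro N
    apply Stmt17Aux.dense_of_powers
    intro j
    set pj : ℕ+ := ⟨j.factorial, j.factorial_pos⟩ with hpj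
    refine ⟨w (N * (m * pj)), ?_, ?_⟩
    · intro a ha1 haj heq
      apply hm
      have hfac : a ∣ j.factorial := Nat.dvd_factorial ha1 haj
      have h2 : w (N * (m * pj)) ^ j.factorial = 1 := by
        obtain ⟨d, hd⟩ := hfac
        rw [hd, pow_mul, heq, one_pow]
      have h3 : w m = w (N * (m * pj)) ^ ((N * pj : ℕ+) : ℕ) := by
        have h4 := hw m (N * pj)
        rw [mul_left_comm m N pj] at h4
        exact h4
      rw [h3]
      have h5 : ((N * pj : ℕ+) : ℕ) = (N : ℕ) * j.factorial := by
        rw [PNat.mul_coe]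
        rfl
      rw [h5, mul_comm ((N:ℕ)) j.factorial, pow_mul, h2, one_pow]
    · intro n hn
      exact ⟨⟨n, hn⟩, m * pj, rfl⟩
  intro z hz
  rw [mem_closure_iff_nhds]
  intro U hU
  rw [nhds_pi] at hU
  obtain ⟨I, hIfin, V, hV, hVU⟩ := Filter.mem_pi.1 hU
  set N : ℕ+ := ∏ i ∈ hIfin.toFinset, i with hN
  have hdvd : ∀ i : ℕ+, ∃ c : ℕ+, i ∈ I → N = i * c := by
    intro i
    by_cases hi : i ∈ I
    · obtain ⟨c, hc⟩ := Finset.dvd_prod_of_mem id (hIfin.mem_toFinset.2 hi)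
      exact ⟨c, fun _ => hc⟩
    · exact ⟨1, fun h => absurd h hi⟩
  choose c hc using hdvd
  have hWmem : ∀ i ∈ hIfin.toFinset,
      (fun u : Circle => u ^ ((c i : ℕ))) ⁻¹' (V i) ∈ 𝓝 (z N) := by
    intro i hi
    rw [hIfin.mem_toFinset] at hi
    apply (continuous_pow ((c i : ℕ))).continuousAt.preimage_mem_nhds
    have hzi : (z N) ^ ((c i : ℕ)) = z i := by
      rw [hc i hi]
      exact (hz i (c i)).symm
    rw [hzi]
    exact hV i
  have hW : (⋂ i ∈ hIfin.toFinset, (fun u : Circle => u ^ ((c i : ℕ))) ⁻¹' V i) ∈ 𝓝 (z N) :=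
    (Filter.biInter_finset_mem _).2 hWmem
  obtain ⟨u, huW, a, b, hu⟩ := mem_closure_iff_nhds.1 (key N (z N)) _ hW
  refine ⟨fun n => (w (n * b)) ^ ((a : ℕ+) : ℕ), hVU ?_, a, b, rfl⟩
  intro i hi
  have hui : u ^ ((c i : ℕ)) ∈ V i := by
    have := Set.mem_iInter₂.1 huW i (hIfin.mem_toFinset.2 hi)
    exact this
  have heq : (w (i * b)) ^ ((a : ℕ+) : ℕ) = u ^ ((c i : ℕ)) := by
    have hidx : (i * b) * (c i) = N * b := by
      rw [mul_right_comm, ← hc i hi]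
    have h6 := hw (i * b) (c i)
    rw [hidx] at h6
    rw [hu, h6, ← pow_mul, ← pow_mul, mul_comm ((c i : ℕ))]
  show (w (i * b)) ^ ((a : ℕ+) : ℕ) ∈ V i
  rw [heq]
  exact hui
end
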